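/- Let n ≥ 1 and let i be an integer with 1 ≤ i < 3^n. Then the binomial coefficient C(3i, i-1) is not divisible by 3 if and only if i = (3^k - 1)/2 for some integer k with 1 ≤ k ≤ n. -/

import Mathlib

private lemma mod3pow (c r j : ℕ) (hr : r < 3) :
    (3 * c + r) % 3 ^ (j + 1) = 3 * (c % 3 ^ j) + r := by
  obtain ⟨q, m, hmlt, rfl⟩ : ∃ q m, m < 3 ^ j ∧ c = 3 ^ j * q + m :=
    ⟨c / 3 ^ j, c % 3 ^ j, Nat.mod_lt _ (pow_pos (by norm_num) j),
      by rw [Nat.div_add_mod]⟩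
  have h2 : (3 ^ j * q + m) % 3 ^ j = m := by rw [Nat.mul_add_mod, Nat.mod_eq_of_lt hmlt]
  rw [h2, show 3 * (3 ^ j * q + m) + r = 3 ^ (j + 1) * q + (3 * m + r) by rw [pow_succ]; ring,
    Nat.mul_add_mod, Nat.mod_eq_of_lt (by rw [pow_succ]; omega)]

private lemma Qzero (a : ℕ)
    (h : ∀ j, a % 3 ^ (j + 1) + (2 * a) % 3 ^ (j + 1) < 3 ^ (j + 1)) : a = 0 := by
  induction a using Nat.strong_induction_on with
  | _ a IH =>
    by_contra ha
    have h0 := h 0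
    simp only [zero_add, pow_one] at h0
    have ha3 : a % 3 = 0 := by omega
    obtain ⟨c, rfl⟩ : ∃ c, a = 3 * c := ⟨a / 3, by omega⟩
    have hc : c = 0 := by
      apply IH c (by omega)
      intro j
      have hj := h (j + 1)
      rw [show 3 * c = 3 * c + 0 by ring, show 2 * (3 * c + 0) = 3 * (2 * c) + 0 by ring,
        mod3pow _ _ _ (by norm_num), mod3pow _ _ _ (by norm_num)] at hj
      have hps : (3:ℕ) ^ (j + 2) = 3 * 3 ^ (j + 1) := by ring
      omega
    omega

private lemma Lpow (a : ℕ)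
    (h : ∀ j, a % 3 ^ (j + 1) + (2 * a + 1) % 3 ^ (j + 1) < 3 ^ (j + 1)) :
    ∃ t, 2 * a + 1 = 3 ^ t := by
  induction a using Nat.strong_induction_on with
  | _ a IH =>
    have h0 := h 0
    simp only [zero_add, pow_one] at h0
    have ha3 : a % 3 = 0 ∨ a % 3 = 1 := by omega
    rcases ha3 with ha3 | ha3
    · obtain ⟨c, rfl⟩ : ∃ c, a = 3 * c := ⟨a / 3, by omega⟩
      have hc : c = 0 := by
        apply Qzero
        intro j
        have hj := h (j + 1)
        rw [show 3 * c = 3 * c + 0 by ring, show 2 * (3 * c + 0) + 1 = 3 * (2 * c) + 1 by ring,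
          mod3pow _ _ _ (by norm_num), mod3pow _ _ _ (by norm_num)] at hj
        have hps : (3:ℕ) ^ (j + 2) = 3 * 3 ^ (j + 1) := by ring
        omega
      exact ⟨0, by omega⟩
    · obtain ⟨c, rfl⟩ : ∃ c, a = 3 * c + 1 := ⟨a / 3, by omega⟩
      obtain ⟨t, ht⟩ : ∃ t, 2 * c + 1 = 3 ^ t := by
        apply IH c (by omega)
        intro j
        have hj := h (j + 1)
        rw [show 2 * (3 * c + 1) + 1 = 3 * (2 * c + 1) + 0 by ring,
          mod3pow _ _ _ (by norm_num), mod3pow _ _ _ (by norm_num)] at hj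
        have hps : (3:ℕ) ^ (j + 2) = 3 * 3 ^ (j + 1) := by ring
        omega
      exact ⟨t + 1, by rw [pow_succ]; omega⟩

private lemma conv (i : ℕ) (hi : 1 ≤ i)
    (h : ∀ j, (i - 1) % 3 ^ (j + 1) + (2 * i + 1) % 3 ^ (j + 1) < 3 ^ (j + 1)) :
    ∃ k, 1 ≤ k ∧ 2 * i + 1 = 3 ^ k := by
  have h0 := h 0
  simp only [zero_add, pow_one] at h0
  have hx : (i - 1) % 3 = 0 := by omega
  obtain ⟨c, hc⟩ : ∃ c, i - 1 = 3 * c := ⟨(i - 1) / 3, by omega⟩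
  obtain ⟨t, ht⟩ : ∃ t, 2 * c + 1 = 3 ^ t := by
    apply Lpow
    intro j
    have hj := h (j + 1)
    rw [show i - 1 = 3 * c + 0 by omega, show 2 * i + 1 = 3 * (2 * c + 1) + 0 by omega,
      mod3pow _ _ _ (by norm_num), mod3pow _ _ _ (by norm_num)] at hj
    have hps : (3:ℕ) ^ (j + 2) = 3 * 3 ^ (j + 1) := by ring
    omega
  exact ⟨t + 1, by omega, by rw [pow_succ]; omega⟩

private lemma fwd (i k : ℕ) (hi : 1 ≤ i) (hk : 2 * i + 1 = 3 ^ k) (j : ℕ) (hj : 1 ≤ j) :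
    (i - 1) % 3 ^ j + (2 * i + 1) % 3 ^ j < 3 ^ j := by
  have hpos : 0 < (3:ℕ) ^ j := pow_pos (by norm_num) j
  have hm : (i - 1) % 3 ^ j < 3 ^ j := Nat.mod_lt _ hpos
  rcases le_or_gt j k with hjk | hjk
  · have hdvd : (3:ℕ) ^ j ∣ 2 * i + 1 := hk ▸ pow_dvd_pow 3 hjk
    rw [Nat.mod_eq_zero_of_dvd hdvd]
    omega
  · have hle : (3:ℕ) ^ (k + 1) ≤ 3 ^ j := Nat.pow_le_pow_right (by norm_num) hjk
    have h1 : (2 * i + 1) % 3 ^ j = 2 * i + 1 := Nat.mod_eq_of_lt (by rw [hk]; calc (3:ℕ)^k < 3^(k+1) := by rw [pow_succ]; omega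
                                                                      _ ≤ 3 ^ j := hle)
    have h2 : (i - 1) % 3 ^ j ≤ i - 1 := Nat.mod_le _ _
    have h3 : (3:ℕ) ^ (k + 1) = 3 * (2 * i + 1) := by rw [pow_succ, hk]; ring
    omega

theorem stmt_9 (n : ℕ) (hn : 1 ≤ n) (i : ℕ) (hi1 : 1 ≤ i) (hi2 : i < 3 ^ n) :
    ¬ (3 ∣ Nat.choose (3 * i) (i - 1)) ↔
      ∃ k : ℕ, 1 ≤ k ∧ k ≤ n ∧ i = (3 ^ k - 1) / 2 := by
  have h3 : Nat.Prime 3 := by norm_num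
  have hkn : i - 1 ≤ 3 * i := by omega
  have hlog : Nat.log 3 (3 * i) < Nat.log 3 (3 * i) + 1 := Nat.lt_succ_self _
  have hmul := Nat.Prime.emultiplicity_choose h3 hkn hlog
  rw [show 3 * i - (i - 1) = 2 * i + 1 by omega] at hmul
  have hiff : ¬ (3 ∣ Nat.choose (3 * i) (i - 1)) ↔
      ∀ j, 1 ≤ j → (i - 1) % 3 ^ j + (2 * i + 1) % 3 ^ j < 3 ^ j := by
    rw [← emultiplicity_eq_zero, hmul, Nat.cast_eq_zero, Finset.card_eq_zero,
      Finset.filter_eq_empty_iff]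
    constructor
    · intro h j hj
      rcases lt_or_ge j (Nat.log 3 (3 * i) + 1) with hjb | hjb
      · have := h (Finset.mem_Ico.mpr ⟨hj, hjb⟩)
        omega
      · have h1 : 3 * i < 3 ^ j := by
          calc 3 * i < 3 ^ (Nat.log 3 (3 * i)).succ := Nat.lt_pow_succ_log_self (by norm_num) _
          _ ≤ 3 ^ j := Nat.pow_le_pow_right (by norm_num) hjb
        have h2 : (i - 1) % 3 ^ j ≤ i - 1 := Nat.mod_le _ _
        have h4 : (2 * i + 1) % 3 ^ j ≤ 2 * i + 1 := Nat.mod_le _ _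
        omega
    · intro h j hj
      have := h j (Finset.mem_Ico.mp hj).1
      omega
  rw [hiff]
  constructor
  · intro h
    obtain ⟨k, hk1, hk2⟩ := conv i hi1 (fun j => h (j + 1) (by omega))
    refine ⟨k, hk1, ?_, by omega⟩
    have h1 : (3:ℕ) ^ k < 3 ^ (n + 1) := by
      have h2 : (3:ℕ) ^ (n + 1) = 3 * 3 ^ n := by rw [pow_succ]; ring
      omega
    have := (Nat.pow_lt_pow_iff_right (by norm_num : 1 < 3)).mp h1
    omega
  · rintro ⟨k, hk1, hk2, rfl⟩
    have hodd : (3:ℕ) ^ k % 2 = 1 := by rw [Nat.pow_mod]; norm_num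
    have hpos : 1 ≤ (3:ℕ) ^ k := Nat.one_le_pow _ _ (by norm_num)
    intro j hj
    exact fwd _ k hi1 (by omega) j hj
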